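/- The Contrastive Log-ratio Upper Bound holds: I(X;Z) ≤ E_{p(x,z)}[log p(z|x)] − E_{p(x)p(z)}[log p(z|x)], i.e., the difference between the CLUB expression and the mutual information is non-negative. -/

import Mathlib

/-- Contrastive Log-ratio Upper Bound (CLUB):
`I(X;Z) ≤ E_{p(x,z)}[log p(z|x)] − E_{p(x)p(z)}[log p(z|x)]`. -/
theorem club_upper_bound {α β : Type*} [Fintype α] [Fintype β]
    (p : α → β → ℝ)
    (hp0 : ∀ x z, 0 < p x z) (hp1 : ∑ x, ∑ z, p x z = 1) :
    ∑ x, ∑ z, p x z *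
      Real.log (p x z / ((∑ z', p x z') * (∑ x', p x' z))) ≤
    (∑ x, ∑ z, p x z * Real.log (p x z / (∑ z', p x z'))) -
    (∑ x, ∑ z, (∑ z', p x z') * (∑ x', p x' z) *
      Real.log (p x z / (∑ z', p x z'))) := by
  rcases isEmpty_or_nonempty α with hα | hα
  · simp at hp1
  rcases isEmpty_or_nonempty β with hβ | hβ
  · simp at hp1
  set pX : α → ℝ := fun x => ∑ z', p x z' with hpXdef
  set pZ : β → ℝ := fun z => ∑ x', p x' z with hpZdef
  have hX : ∀ x, 0 < pX x := fun x => Finset.sum_pos (fun z _ => hp0 x z) Finset.univ_nonempty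
  have hZ : ∀ z, 0 < pZ z := fun z => Finset.sum_pos (fun x _ => hp0 x z) Finset.univ_nonempty
  have hX1 : ∑ x, pX x = 1 := hp1
  -- Key pointwise (in z) Jensen-type inequality
  have key : ∀ z, (∑ x, pX x * Real.log (p x z / pX x)) ≤ Real.log (pZ z) := by
    intro z
    have h1 : ∀ x, pX x * Real.log (p x z / pX x) - pX x * Real.log (pZ z)
        ≤ p x z / pZ z - pX x := by
      intro x
      have hpos : 0 < p x z / (pX x * pZ z) := by
        have := hp0 x z; have := hX x; have := hZ z; positivity
      have hlog := Real.log_le_sub_one_of_pos hpos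
      have heq : Real.log (p x z / (pX x * pZ z))
          = Real.log (p x z / pX x) - Real.log (pZ z) := by
        rw [div_mul_eq_div_div,
          Real.log_div (div_ne_zero (hp0 x z).ne' (hX x).ne') (hZ z).ne']
      calc pX x * Real.log (p x z / pX x) - pX x * Real.log (pZ z)
          = pX x * Real.log (p x z / (pX x * pZ z)) := by rw [heq]; ring
        _ ≤ pX x * (p x z / (pX x * pZ z) - 1) :=
            mul_le_mul_of_nonneg_left hlog (hX x).le
        _ = p x z / pZ z - pX x := by
            have h1 := (hX x).ne'
            have h2 := (hZ z).ne'
            field_simp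
    have h2 : ∑ x, (pX x * Real.log (p x z / pX x) - pX x * Real.log (pZ z))
        ≤ ∑ x, (p x z / pZ z - pX x) := Finset.sum_le_sum (fun x _ => h1 x)
    have h3 : ∑ x, (p x z / pZ z - pX x) = 0 := by
      rw [Finset.sum_sub_distrib, ← Finset.sum_div, hX1]
      have : ∑ x, p x z = pZ z := rfl
      rw [this, div_self (hZ z).ne']
      ring
    have h4 : ∑ x, pX x * Real.log (pZ z) = Real.log (pZ z) := by
      rw [← Finset.sum_mul, hX1, one_mul]
    rw [Finset.sum_sub_distrib, h3, h4] at h2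
    linarith
  -- second RHS term bounded by ∑ z, pZ z * log (pZ z)
  have hC : ∑ x, ∑ z, pX x * pZ z * Real.log (p x z / pX x)
      ≤ ∑ z, pZ z * Real.log (pZ z) := by
    rw [Finset.sum_comm]
    refine Finset.sum_le_sum fun z _ => ?_
    have : ∑ x, pX x * pZ z * Real.log (p x z / pX x)
        = pZ z * ∑ x, pX x * Real.log (p x z / pX x) := by
      rw [Finset.mul_sum]; exact Finset.sum_congr rfl fun x _ => by ring
    rw [this]
    exact mul_le_mul_of_nonneg_left (key z) (hZ z).le
  -- LHS identity
  have hA : ∑ x, ∑ z, p x z * Real.log (p x z / (pX x * pZ z))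
      = (∑ x, ∑ z, p x z * Real.log (p x z / pX x)) - ∑ z, pZ z * Real.log (pZ z) := by
    have h5 : ∀ x z, p x z * Real.log (p x z / (pX x * pZ z))
        = p x z * Real.log (p x z / pX x) - p x z * Real.log (pZ z) := by
      intro x z
      rw [div_mul_eq_div_div, Real.log_div (div_ne_zero (hp0 x z).ne' (hX x).ne') (hZ z).ne']
      ring
    have h6 : ∑ x, ∑ z, p x z * Real.log (pZ z) = ∑ z, pZ z * Real.log (pZ z) := by
      rw [Finset.sum_comm]
      refine Finset.sum_congr rfl fun z _ => ?_
      rw [← Finset.sum_mul]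
    calc ∑ x, ∑ z, p x z * Real.log (p x z / (pX x * pZ z))
        = ∑ x, ∑ z, (p x z * Real.log (p x z / pX x) - p x z * Real.log (pZ z)) := by
          exact Finset.sum_congr rfl fun x _ => Finset.sum_congr rfl fun z _ => h5 x z
      _ = (∑ x, ∑ z, p x z * Real.log (p x z / pX x)) - ∑ x, ∑ z, p x z * Real.log (pZ z) := by
          rw [← Finset.sum_sub_distrib]
          exact Finset.sum_congr rfl fun x _ => Finset.sum_sub_distrib _ _
      _ = _ := by rw [h6]
  rw [hA]
  linarith
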